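/- Let n ≥ 2 and let H₀, H₁, …, Hₙ be n+1 linear hyperplanes in ℝⁿ (linear subspaces of dimension n−1) in general position, meaning that the intersection of any n of them is {0}. Then the collection {H₀, …, Hₙ} is a rigid pattern: for all K ≥ 1, C ≥ 0 and R ≥ 0 there exists R' ≥ 0 (depending only on K, C, R and the hyperplanes) such that if f : ℝⁿ → ℝⁿ is a (K,C)-quasi-isometry with the property that for each j ∈ {0, …, n} and each v ∈ ℝⁿ there exists w ∈ ℝⁿ with the Hausdorff distance between f(v + Hⱼ) and w + Hⱼ at most R, then there exist λ ∈ ℝ with λ ≠ 0 and b ∈ ℝⁿ such that ‖f(x) − (λ·x + b)‖ ≤ R' for all x ∈ ℝⁿ; that is, f is within distance R' of an affine homothety. -/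

import Mathlib

/-- A `(K,C)`-quasi-isometric embedding between metric spaces. -/
def IsQIEmbedding {X Y : Type*} [MetricSpace X] [MetricSpace Y] (K C : ℝ) (f : X → Y) : Prop :=
  ∀ x x' : X, (1/K) * dist x x' - C ≤ dist (f x) (f x') ∧
    dist (f x) (f x') ≤ K * dist x x' + C

/-- A `(K,C)`-quasi-isometry between metric spaces. -/
def IsQI {X Y : Type*} [MetricSpace X] [MetricSpace Y] (K C : ℝ) (f : X → Y) : Prop :=
  IsQIEmbedding K C f ∧ ∀ y : Y, ∃ x : X, dist (f x) y ≤ C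

/-- The affine subspace through `v` parallel to the linear subspace `V`. -/
def affTranslate {n : ℕ} (v : EuclideanSpace ℝ (Fin n))
    (V : Submodule ℝ (EuclideanSpace ℝ (Fin n))) : Set (EuclideanSpace ℝ (Fin n)) :=
  (fun x => v + x) '' (V : Set (EuclideanSpace ℝ (Fin n)))


open Filter Topology

set_option maxHeartbeats 2000000

open Filter Topology

/-- A quasi-additive function of linear growth is within `δ` of a linear function. -/
lemma quasiAdditive_near_linear (h : ℝ → ℝ) (δ A B : ℝ) (hA : 0 ≤ A)
    (hadd : ∀ s t, |h (s + t) - h s - h t| ≤ δ)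
    (hgrow : ∀ t, |h t| ≤ A * |t| + B) :
    ∃ lam : ℝ, ∀ t, |h t - lam * t| ≤ δ := by
  set a : ℝ → ℕ → ℝ := fun t k => h (2 ^ k * t) / 2 ^ k with ha
  have hdistk : ∀ t k, dist (a t k) (a t (k + 1)) ≤ (δ / 2) * (1 / 2) ^ k := by
    intro t k
    have h2 := hadd (2 ^ k * t) (2 ^ k * t)
    have e1 : (2 : ℝ) ^ k * t + 2 ^ k * t = 2 ^ (k + 1) * t := by ring
    rw [e1] at h2
    have hpow : (0 : ℝ) < 2 ^ (k + 1) := by positivity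
    rw [Real.dist_eq]
    have : a t k - a t (k + 1) =
        (h (2 ^ (k + 1) * t) - h (2 ^ k * t) - h (2 ^ k * t)) / (-(2 ^ (k + 1))) := by
      simp only [ha]
      field_simp
      ring
    rw [this, abs_div, abs_neg, abs_of_pos hpow]
    rw [div_le_iff₀ hpow]
    have h2k : ((1:ℝ)/2) ^ k * 2 ^ k = 1 := by
      rw [one_div, inv_pow, inv_mul_cancel₀ (by positivity)]
    calc |h (2 ^ (k + 1) * t) - h (2 ^ k * t) - h (2 ^ k * t)| ≤ δ := h2
      _ = δ / 2 * ((1/2) ^ k * 2 ^ k) * 2 := by rw [h2k]; ring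
      _ = δ / 2 * (1 / 2) ^ k * 2 ^ (k + 1) := by rw [pow_succ]; ring
  have hcauchy : ∀ t, CauchySeq (a t) :=
    fun t => cauchySeq_of_le_geometric (1/2) (δ/2) (by norm_num) (hdistk t)
  have hlim : ∀ t, ∃ L : ℝ, Tendsto (a t) atTop (𝓝 L) :=
    fun t => cauchySeq_tendsto_of_complete (hcauchy t)
  choose L hL using hlim
  have hclose : ∀ t, |h t - L t| ≤ δ := by
    intro t
    have := dist_le_of_le_geometric_of_tendsto₀ (1/2) (δ/2) (by norm_num) (hdistk t) (hL t)
    have e0 : a t 0 = h t := by simp [ha]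
    rw [e0, Real.dist_eq] at this
    calc |h t - L t| ≤ (δ/2) / (1 - 1/2) := this
      _ = δ := by ring
  have hLadd : ∀ s t, L (s + t) = L s + L t := by
    intro s t
    have h1 : Tendsto (fun k => a s k + a t k) atTop (𝓝 (L s + L t)) := (hL s).add (hL t)
    have h2 : Tendsto (fun k => dist (a s k + a t k) (a (s + t) k)) atTop (𝓝 0) := by
      have hb : ∀ k : ℕ, dist (a s k + a t k) (a (s + t) k) ≤ δ * (1/2) ^ k := by
        intro k
        have := hadd (2 ^ k * s) (2 ^ k * t)
        have e1 : (2 : ℝ) ^ k * s + 2 ^ k * t = 2 ^ k * (s + t) := by ring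
        rw [e1] at this
        have hpow : (0 : ℝ) < 2 ^ k := by positivity
        rw [Real.dist_eq]
        have e2 : a s k + a t k - a (s + t) k =
            -((h (2 ^ k * (s + t)) - h (2 ^ k * s) - h (2 ^ k * t)) / 2 ^ k) := by
          simp only [ha]; field_simp; ring
        rw [e2, abs_neg, abs_div, abs_of_pos hpow, div_le_iff₀ hpow]
        have h2k : ((1:ℝ)/2) ^ k * 2 ^ k = 1 := by
          rw [one_div, inv_pow, inv_mul_cancel₀ (by positivity)]
        calc |h (2 ^ k * (s + t)) - h (2 ^ k * s) - h (2 ^ k * t)| ≤ δ := this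
          _ = δ * (1/2) ^ k * 2 ^ k := by rw [mul_assoc, h2k, mul_one]
      have hgeo : Tendsto (fun k : ℕ => δ * (1/2) ^ k) atTop (𝓝 0) := by
        simpa using (tendsto_pow_atTop_nhds_zero_of_lt_one (by norm_num : (0:ℝ) ≤ 1/2)
          (by norm_num : (1:ℝ)/2 < 1)).const_mul δ
      exact squeeze_zero (fun k => dist_nonneg) hb hgeo
    have h3 : Tendsto (fun k => a (s + t) k) atTop (𝓝 (L s + L t)) :=
      h1.congr_dist h2
    exact tendsto_nhds_unique (hL (s + t)) h3
  have hLgrow : ∀ t, |L t| ≤ A * |t| := by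
    intro t
    have h1 : Tendsto (fun k => |a t k|) atTop (𝓝 |L t|) := (hL t).abs
    have h2 : Tendsto (fun k : ℕ => A * |t| + B * (1/2) ^ k) atTop (𝓝 (A * |t|)) := by
      have : Tendsto (fun k : ℕ => B * (1/2) ^ k) atTop (𝓝 0) := by
        simpa using (tendsto_pow_atTop_nhds_zero_of_lt_one (by norm_num : (0:ℝ) ≤ 1/2)
          (by norm_num : (1:ℝ)/2 < 1)).const_mul B
      simpa using tendsto_const_nhds.add this
    refine le_of_tendsto_of_tendsto h1 h2 ?_
    filter_upwards with k
    have hpow : (0 : ℝ) < 2 ^ k := by positivity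
    have := hgrow (2 ^ k * t)
    rw [abs_mul, abs_of_pos hpow] at this
    have hq : |h (2 ^ k * t)| / 2 ^ k ≤ (2 ^ k * |t| * A + B) / 2 ^ k := by
      gcongr
      · linarith
    calc |a t k| = |h (2 ^ k * t)| / 2 ^ k := by
          rw [ha]; simp [abs_div, abs_of_pos hpow]
      _ ≤ (2 ^ k * |t| * A + B) / 2 ^ k := hq
      _ = A * |t| + B * (1/2) ^ k := by rw [one_div, inv_pow]; field_simp
  -- L is additive and Lipschitz, hence linear
  have hL0 : L 0 = 0 := by
    have := hLadd 0 0
    simp at this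
    linarith
  have hLlip : LipschitzWith (Real.toNNReal A) L := by
    apply LipschitzWith.of_dist_le_mul
    intro x y
    have : L x = L y + L (x - y) := by
      rw [← hLadd]; ring_nf
    rw [Real.dist_eq, Real.dist_eq, this]
    have := hLgrow (x - y)
    calc |L y + L (x - y) - L y| = |L (x - y)| := by ring_nf
      _ ≤ A * |x - y| := hLgrow _
      _ = (Real.toNNReal A : ℝ) * |x - y| := by rw [Real.coe_toNNReal A hA]
  have hLcont : Continuous L := hLlip.continuous
  set F : ℝ →+ ℝ := AddMonoidHom.mk' L hLadd with hF
  have hlin : ∀ t : ℝ, L t = t * L 1 := by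
    intro t
    have := map_real_smul F hLcont t 1
    simpa [hF, smul_eq_mul] using this
  refine ⟨L 1, fun t => ?_⟩
  have := hclose t
  rw [hlin t] at this
  calc |h t - L 1 * t| = |h t - t * L 1| := by ring_nf
    _ ≤ δ := this


/-- Sum over `Fin N` of a function vanishing off three distinct indices. -/
lemma sum_three_support {N : ℕ} (F : Fin N → ℝ) (i₀ i₁ i₂ : Fin N)
    (h01 : i₀ ≠ i₁) (h02 : i₀ ≠ i₂) (h12 : i₁ ≠ i₂)
    (hF : ∀ j, j ≠ i₀ → j ≠ i₁ → j ≠ i₂ → F j = 0) :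
    ∑ j, F j = F i₀ + F i₁ + F i₂ := by
  have hsub : ∑ j ∈ ({i₀, i₁, i₂} : Finset (Fin N)), F j = ∑ j, F j := by
    apply Finset.sum_subset (Finset.subset_univ _)
    intro x _ hx
    simp only [Finset.mem_insert, Finset.mem_singleton, not_or] at hx
    exact hF x hx.1 hx.2.1 hx.2.2
  rw [← hsub]
  rw [Finset.sum_insert (by simp [h01, h02]), Finset.sum_insert (by simp [h12]),
    Finset.sum_singleton]
  ring

lemma sum_two_support {N : ℕ} (F : Fin N → ℝ) (i₀ i₁ : Fin N) (h01 : i₀ ≠ i₁)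
    (hF : ∀ j, j ≠ i₀ → j ≠ i₁ → F j = 0) :
    ∑ j, F j = F i₀ + F i₁ := by
  have hsub : ∑ j ∈ ({i₀, i₁} : Finset (Fin N)), F j = ∑ j, F j := by
    apply Finset.sum_subset (Finset.subset_univ _)
    intro x _ hx
    simp only [Finset.mem_insert, Finset.mem_singleton, not_or] at hx
    exact hF x hx.1 hx.2
  rw [← hsub, Finset.sum_insert (by simp [h01]), Finset.sum_singleton]

/-- From the coarse functional equation to a common affine approximation. -/
lemma funceq_to_affine {N : ℕ} (c : Fin N → ℝ) (g : Fin N → ℝ → ℝ)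
    (i₀ i₁ i₂ : Fin N) (h01 : i₀ ≠ i₁) (h02 : i₀ ≠ i₂) (h12 : i₁ ≠ i₂)
    (hc : ∀ j, c j ≠ 0) (M A B : ℝ) (hM : 0 ≤ M) (hA : 0 ≤ A)
    (hg0 : ∀ j, g j 0 = 0)
    (hgrow : ∀ t, |g i₀ t| ≤ A * |t| + B)
    (hrel : ∀ t : Fin N → ℝ, ∑ j, c j * t j = 0 → |∑ j, c j * g j (t j)| ≤ M) :
    ∃ lam : ℝ, ∀ j t, |g j t - lam * t| ≤ 4 * M / |c j| := by
  classical
  set h : ℝ → ℝ := fun t => c i₀ * g i₀ (t / c i₀) with hh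
  -- three-slot relation
  have three : ∀ s t : ℝ,
      |h (s + t) + c i₁ * g i₁ (-(s / c i₁)) + c i₂ * g i₂ (-(t / c i₂))| ≤ M := by
    intro s t
    set tt : Fin N → ℝ := fun j =>
      if j = i₀ then (s + t) / c i₀ else if j = i₁ then -(s / c i₁)
        else if j = i₂ then -(t / c i₂) else 0 with htt
    have hrel0 : ∑ j, c j * tt j = 0 := by
      rw [sum_three_support _ i₀ i₁ i₂ h01 h02 h12]
      · simp only [htt, if_pos rfl, if_neg (Ne.symm h01), if_neg (Ne.symm h02),
          if_neg (Ne.symm h12), if_neg h01.symm, if_true]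
        field_simp [hc i₀, hc i₁, hc i₂]
        ring
      · intro j hj0 hj1 hj2
        simp [htt, hj0, hj1, hj2]
    have := hrel tt hrel0
    rw [sum_three_support (fun j => c j * g j (tt j)) i₀ i₁ i₂ h01 h02 h12
      (by intro j hj0 hj1 hj2; simp [htt, hj0, hj1, hj2, hg0])] at this
    simp only [htt, if_pos rfl, if_neg (Ne.symm h01), if_neg (Ne.symm h02),
      if_neg (Ne.symm h12), if_neg h01.symm] at this
    exact this
  -- two-slot relation
  have two : ∀ (j : Fin N), j ≠ i₀ → ∀ t : ℝ,
      |h (-(c j * t)) + c j * g j t| ≤ M := by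
    intro j hj t
    set tt : Fin N → ℝ := fun i =>
      if i = i₀ then -(c j * t) / c i₀ else if i = j then t else 0 with htt
    have hrel0 : ∑ i, c i * tt i = 0 := by
      rw [sum_two_support _ i₀ j (Ne.symm hj)]
      · simp only [htt, if_pos rfl, if_neg hj, if_true]
        field_simp [hc i₀, hc j]
        ring
      · intro i hi0 hij
        simp [htt, hi0, hij]
    have := hrel tt hrel0
    rw [sum_two_support (fun i => c i * g i (tt i)) i₀ j (Ne.symm hj)
      (by intro i hi0 hij; simp [htt, hi0, hij, hg0])] at this
    simp only [htt, if_pos rfl, if_neg hj] at this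
    exact this
  -- quasi-additivity of h
  have hadd : ∀ s t, |h (s + t) - h s - h t| ≤ 3 * M := by
    intro s t
    have e1 := three s t
    have e2 := three s 0
    have e3 := three 0 t
    have hs0 : h (s + 0) = h s := by rw [add_zero]
    have ht0 : h (0 + t) = h t := by rw [zero_add]
    rw [hs0] at e2
    rw [ht0] at e3
    simp only [neg_zero, zero_div, hg0, mul_zero, add_zero] at e2 e3
    set X := c i₁ * g i₁ (-(s / c i₁))
    set Y := c i₂ * g i₂ (-(t / c i₂))
    have : h (s + t) - h s - h t = (h (s+t) + X + Y) - (h s + X) - (h t + Y) := by ring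
    rw [this]
    calc |(h (s+t) + X + Y) - (h s + X) - (h t + Y)|
        ≤ |(h (s+t) + X + Y) - (h s + X)| + |h t + Y| := abs_sub _ _
      _ ≤ (|h (s+t) + X + Y| + |h s + X|) + |h t + Y| := by
          have := abs_sub (h (s+t) + X + Y) (h s + X)
          linarith [abs_sub_abs_le_abs_sub (h (s+t) + X + Y) (h s + X)]
      _ ≤ 3 * M := by linarith [e1, e2, e3]
  -- growth of h
  have hgrowh : ∀ t, |h t| ≤ A * |t| + |c i₀| * B := by
    intro t
    have := hgrow (t / c i₀)
    have hci : |c i₀| > 0 := abs_pos.mpr (hc i₀)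
    calc |h t| = |c i₀| * |g i₀ (t / c i₀)| := by rw [hh]; exact abs_mul _ _
      _ ≤ |c i₀| * (A * |t / c i₀| + B) := by
          apply mul_le_mul_of_nonneg_left this (abs_nonneg _)
      _ = A * |t| + |c i₀| * B := by
          rw [abs_div]
          field_simp
  obtain ⟨lam, hlam⟩ := quasiAdditive_near_linear h (3*M) A (|c i₀| * B) hA hadd hgrowh
  refine ⟨lam, fun j t => ?_⟩
  have hci : (0:ℝ) < |c i₀| := abs_pos.mpr (hc i₀)
  have hcj : (0:ℝ) < |c j| := abs_pos.mpr (hc j)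
  rw [le_div_iff₀ hcj, ← abs_mul]
  by_cases hj : j = i₀
  · subst hj
    have e : c j * t / c j = t := mul_div_cancel_left₀ t (hc j)
    have h5 : |c j * g j t - lam * (c j * t)| ≤ 3 * M := by
      have h6 := hlam (c j * t)
      rw [hh] at h6
      simpa [e] using h6
    have e2 : (g j t - lam * t) * c j = c j * g j t - lam * (c j * t) := by ring
    rw [e2]
    linarith [h5]
  · have h2 := two j hj t
    have h3 := hlam (-(c j * t))
    have e2 : (g j t - lam * t) * c j =
        (h (-(c j * t)) + c j * g j t) - (h (-(c j * t)) - lam * -(c j * t)) := by ring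
    rw [e2]
    calc |(h (-(c j * t)) + c j * g j t) - (h (-(c j * t)) - lam * -(c j * t))|
        ≤ |h (-(c j * t)) + c j * g j t| + |h (-(c j * t)) - lam * -(c j * t)| := abs_sub _ _
      _ ≤ M + 3 * M := add_le_add h2 h3
      _ = 4 * M := by ring

local notation "⟪" x ", " y "⟫" => inner (𝕜 := ℝ) x y

/-- **Rigidity of `n+1` hyperplanes in general position.**
Let `n ≥ 2` and let `H₀, …, Hₙ` be `n+1` linear hyperplanes of `ℝⁿ` in general position
(the intersection of any `n` of them is `{0}`).  For all `K ≥ 1`, `C ≥ 0`, `R ≥ 0` there is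
`R' ≥ 0` such that any `(K,C)`-quasi-isometry `f : ℝⁿ → ℝⁿ` sending each affine subspace
parallel to some `Hⱼ` within Hausdorff distance `R` of an affine subspace parallel to the
same `Hⱼ` is within distance `R'` of an affine homothety `x ↦ λ·x + b` with `λ ≠ 0`. -/
theorem hyperplanes_in_general_position_rigid
    (n : ℕ) (hn : 2 ≤ n)
    (H : Fin (n + 1) → Submodule ℝ (EuclideanSpace ℝ (Fin n)))
    (hdim : ∀ j, Module.finrank ℝ (H j) = n - 1)
    (hgen : ∀ j : Fin (n + 1), (⨅ (i) (_ : i ≠ j), H i) = ⊥)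
    (K C R : ℝ) (hK : 1 ≤ K) (hC : 0 ≤ C) (hR : 0 ≤ R) :
    ∃ R' : ℝ, 0 ≤ R' ∧
      ∀ f : EuclideanSpace ℝ (Fin n) → EuclideanSpace ℝ (Fin n),
        IsQI K C f →
        (∀ (j : Fin (n + 1)) (v : EuclideanSpace ℝ (Fin n)),
          ∃ w : EuclideanSpace ℝ (Fin n),
            EMetric.hausdorffEdist (f '' affTranslate v (H j)) (affTranslate w (H j)) ≤
              ENNReal.ofReal R) →
        ∃ (lam : ℝ) (b : EuclideanSpace ℝ (Fin n)), lam ≠ 0 ∧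
          ∀ x, dist (f x) (lam • x + b) ≤ R' := by
    classical
  set E := EuclideanSpace ℝ (Fin n) with hE
  have hfinE : Module.finrank ℝ E = n := finrank_euclideanSpace_fin
  -- Step 1: unit normal vectors
  have hu : ∀ j, ∃ u : E, ‖u‖ = 1 ∧ u ∈ (H j)ᗮ := by
    intro j
    have horth := Submodule.finrank_add_finrank_orthogonal (K := H j)
    rw [hdim j, hfinE] at horth
    have hpos : 0 < Module.finrank ℝ (H j)ᗮ := by omega
    obtain ⟨⟨v, hvmem⟩, hvne⟩ := Module.finrank_pos_iff_exists_ne_zero.mp hpos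
    have hv0 : v ≠ 0 := by
      intro h0
      apply hvne
      exact Subtype.ext h0
    refine ⟨‖v‖⁻¹ • v, ?_, Submodule.smul_mem _ _ hvmem⟩
    rw [norm_smul, norm_inv, norm_norm, inv_mul_cancel₀ (norm_ne_zero_iff.mpr hv0)]
  choose u hu1 hu2 using hu
  -- Step 2: H j is the kernel of x ↦ ⟪u j, x⟫
  have hker : ∀ j (x : E), x ∈ H j ↔ ⟪u j, x⟫ = 0 := by
    intro j
    set L : E →ₗ[ℝ] ℝ := innerₛₗ ℝ (u j) with hL
    have hle : H j ≤ LinearMap.ker L := by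
      intro x hx
      rw [LinearMap.mem_ker, hL, innerₛₗ_apply_apply]
      rw [real_inner_comm]
      exact (Submodule.mem_orthogonal (H j) (u j)).mp (hu2 j) x hx
    have hrange : Module.finrank ℝ (LinearMap.range L) = 1 := by
      have h1 : LinearMap.range L = ⊤ := by
        rw [LinearMap.range_eq_top]
        intro r
        refine ⟨r • u j, ?_⟩
        rw [hL, innerₛₗ_apply_apply, real_inner_smul_right, real_inner_self_eq_norm_sq, hu1 j]
        ring
      rw [h1, finrank_top, Module.finrank_self]
    have hrn := LinearMap.finrank_range_add_finrank_ker L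
    rw [hfinE, hrange] at hrn
    have hkerrank : Module.finrank ℝ (LinearMap.ker L) = n - 1 := by omega
    have heq : H j = LinearMap.ker L :=
      Submodule.eq_of_le_of_finrank_eq hle (by rw [hdim j, hkerrank])
    intro x
    rw [heq, LinearMap.mem_ker, hL, innerₛₗ_apply_apply]
  -- Step 3: for each j, the map x ↦ (⟪u i, x⟫)_{i ≠ j} is bijective
  set T : (j : Fin (n+1)) → (E →ₗ[ℝ] ({i : Fin (n+1) // i ≠ j} → ℝ)) :=
    fun j => LinearMap.pi (fun i : {i : Fin (n+1) // i ≠ j} => innerₛₗ ℝ (u i.1)) with hT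
  have hTapp : ∀ (j : Fin (n+1)) (x : E) (i : {i : Fin (n+1) // i ≠ j}),
      T j x i = ⟪u i.1, x⟫ := by
    intro j x i
    rw [hT]
    simp [LinearMap.pi_apply, innerₛₗ_apply_apply]
  have hcard : ∀ j : Fin (n+1), Fintype.card {i : Fin (n+1) // i ≠ j} = n := by
    intro j
    rw [Fintype.card_subtype_compl, Fintype.card_fin, Fintype.card_subtype_eq]
    omega
  have hTinj : ∀ j, Function.Injective (T j) := by
    intro j
    rw [← LinearMap.ker_eq_bot]
    rw [eq_bot_iff]
    intro x hx
    rw [LinearMap.mem_ker] at hx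
    have hx2 : x ∈ (⨅ (i) (_ : i ≠ j), H i) := by
      rw [Submodule.mem_iInf]
      intro i
      rw [Submodule.mem_iInf]
      intro hi
      rw [hker i x]
      have := congrFun hx ⟨i, hi⟩
      rw [hTapp] at this
      simpa using this
    rw [hgen j] at hx2
    simpa using hx2
  have hTsurj : ∀ j, Function.Surjective (T j) := by
    intro j
    rw [← LinearMap.injective_iff_surjective_of_finrank_eq_finrank
      (by rw [hfinE, Module.finrank_pi, hcard])]
    exact hTinj j
  -- Step 4: the linear relation between the normals
  have hnotli : ¬ LinearIndependent ℝ u := by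
    intro hli
    have := hli.fintype_card_le_finrank
    rw [Fintype.card_fin, hfinE] at this
    omega
  obtain ⟨c, hcrel, i₀', hc0'⟩ := Fintype.not_linearIndependent_iff.mp hnotli
  have hcne : ∀ j, c j ≠ 0 := by
    intro j hcj
    apply hc0'
    by_cases hij : i₀' = j
    · rw [hij]; exact hcj
    · -- show c i₀' = 0 using surjectivity of T j
      obtain ⟨x, hx⟩ := hTsurj j (Pi.single ⟨i₀', hij⟩ 1)
      have hsum : ∑ i, c i * ⟪u i, x⟫ = 0 := by
        have := congrArg (fun z => ⟪z, x⟫) hcrel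
        simpa [sum_inner (𝕜 := ℝ) (E := E), inner_zero_left (𝕜 := ℝ) (E := E), real_inner_smul_left] using this
      rw [Finset.sum_eq_single i₀'] at hsum
      · have hval : ⟪u i₀', x⟫ = 1 := by
          have := congrFun hx ⟨i₀', hij⟩
          rw [hTapp] at this
          rw [this, Pi.single_eq_same]
        rw [hval, mul_one] at hsum
        exact hsum
      · intro i _ hii
        by_cases hij2 : i = j
        · rw [hij2, hcj, zero_mul]
        · have := congrFun hx ⟨i, hij2⟩
          rw [hTapp] at this
          have hz : ⟪u i, x⟫ = 0 := by
            rw [this, Pi.single_eq_of_ne]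
            simp [hii]
          rw [hz, mul_zero]
      · intro habs
        exact absurd (Finset.mem_univ i₀') habs
  -- Step 5: membership in affine translates
  have haff : ∀ (j : Fin (n+1)) (v x : E), x ∈ affTranslate v (H j) ↔ ⟪u j, x⟫ = ⟪u j, v⟫ := by
    intro j v x
    constructor
    · rintro ⟨p, hp, rfl⟩
      rw [inner_add_right, (hker j p).mp hp, add_zero]
    · intro hx
      refine ⟨x - v, ?_, by show v + (x - v) = x; rw [add_comm]; exact sub_add_cancel x v⟩
      rw [SetLike.mem_coe, hker]
      rw [inner_sub_right, hx, sub_self]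
  -- the constants
  set S : ℝ := ∑ j, |c j| with hSdef
  set M : ℝ := 2 * R * S with hMdef
  have hSnn : 0 ≤ S := Finset.sum_nonneg fun j _ => abs_nonneg _
  have hMnn : 0 ≤ M := by positivity
  set cmin : ℝ := Finset.univ.inf' ⟨0, Finset.mem_univ 0⟩ (fun j => |c j|) with hcmindef
  have hcminpos : 0 < cmin := by
    rw [hcmindef]
    exact (Finset.lt_inf'_iff _).2 fun i _ => abs_pos.mpr (hcne i)
  have hcminle : ∀ j, cmin ≤ |c j| := fun j => Finset.inf'_le _ (Finset.mem_univ j)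
  set ε : ℝ := 2 * R + 4 * M / cmin with hεdef
  have hεnn : 0 ≤ ε := by positivity
  set Teq : E ≃ₗ[ℝ] ({i : Fin (n+1) // i ≠ 0} → ℝ) :=
    LinearEquiv.ofBijective (T 0) ⟨hTinj 0, hTsurj 0⟩ with hTeqdef
  set Sc : ({i : Fin (n+1) // i ≠ 0} → ℝ) →L[ℝ] E :=
    LinearMap.toContinuousLinearMap (Teq.symm : _ →ₗ[ℝ] E) with hScdef
  refine ⟨‖Sc‖ * ε, mul_nonneg (norm_nonneg _) hεnn, ?_⟩
  intro f hQI hplanes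
  set R' : ℝ := ‖Sc‖ * ε with hR'def
  have hR'nn : 0 ≤ R' := mul_nonneg (norm_nonneg _) hεnn
  -- Step 6: two points on the same translate have close functionals after f
  have hest : ∀ (j : Fin (n+1)) (v : E) (w : E),
      EMetric.hausdorffEdist (f '' affTranslate v (H j)) (affTranslate w (H j)) ≤
        ENNReal.ofReal R →
      ∀ x : E, ⟪u j, x⟫ = ⟪u j, v⟫ → |⟪u j, f x⟫ - ⟪u j, w⟫| ≤ R := by
    intro j v w hw x hx
    have hmem : f x ∈ f '' affTranslate v (H j) :=
      Set.mem_image_of_mem f ((haff j v x).mpr hx)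
    have h1 : EMetric.infEdist (f x) (affTranslate w (H j)) ≤ ENNReal.ofReal R :=
      le_trans (EMetric.infEdist_le_hausdorffEdist_of_mem hmem) hw
    have h2 : ENNReal.ofReal (|⟪u j, f x⟫ - ⟪u j, w⟫|) ≤
        EMetric.infEdist (f x) (affTranslate w (H j)) := by
      refine Metric.le_infEDist.mpr ?_
      intro z hz
      have hzw : ⟪u j, z⟫ = ⟪u j, w⟫ := (haff j w z).mp hz
      rw [edist_dist]
      apply ENNReal.ofReal_le_ofReal
      calc |⟪u j, f x⟫ - ⟪u j, w⟫| = |⟪u j, f x - z⟫| := by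
            rw [inner_sub_right, hzw]
        _ ≤ ‖u j‖ * ‖f x - z‖ := abs_real_inner_le_norm _ _
        _ = dist (f x) z := by rw [hu1 j, one_mul, dist_eq_norm]
    exact (ENNReal.ofReal_le_ofReal_iff hR).mp (le_trans h2 h1)
  have key : ∀ (j : Fin (n+1)) (v x₁ x₂ : E), ⟪u j, x₁⟫ = ⟪u j, v⟫ →
      ⟪u j, x₂⟫ = ⟪u j, v⟫ → |⟪u j, f x₁⟫ - ⟪u j, f x₂⟫| ≤ 2 * R := by
    intro j v x₁ x₂ h1 h2
    obtain ⟨w, hw⟩ := hplanes j v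
    have e1 := hest j v w hw x₁ h1
    have e2 := hest j v w hw x₂ h2
    calc |⟪u j, f x₁⟫ - ⟪u j, f x₂⟫|
        = |(⟪u j, f x₁⟫ - ⟪u j, w⟫) - (⟪u j, f x₂⟫ - ⟪u j, w⟫)| := by ring_nf
      _ ≤ |⟪u j, f x₁⟫ - ⟪u j, w⟫| + |⟪u j, f x₂⟫ - ⟪u j, w⟫| := abs_sub _ _
      _ ≤ 2 * R := by linarith
  -- Step 7: the one-dimensional companions
  set g : Fin (n+1) → ℝ → ℝ := fun j t => ⟪u j, f (t • u j)⟫ with hgdef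
  have hinner_smul : ∀ (j : Fin (n+1)) (t : ℝ), ⟪u j, t • u j⟫ = t := by
    intro j t
    rw [real_inner_smul_right, real_inner_self_eq_norm_sq, hu1 j]
    ring
  have gcomp : ∀ (j : Fin (n+1)) (x : E), |⟪u j, f x⟫ - g j ⟪u j, x⟫| ≤ 2 * R := by
    intro j x
    exact key j x x (⟪u j, x⟫ • u j) rfl (hinner_smul j _)
  have hcinner : ∀ y : E, ∑ i, c i * ⟪u i, y⟫ = 0 := by
    intro y
    have := congrArg (fun z : E => ⟪z, y⟫) hcrel
    simpa [sum_inner (𝕜 := ℝ) (E := E), inner_zero_left (𝕜 := ℝ) (E := E), real_inner_smul_left] using this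
  have hg0sum : ∑ j, c j * g j 0 = 0 := by
    have : ∀ j : Fin (n+1), g j 0 = ⟪u j, f 0⟫ := by
      intro j; rw [hgdef]; simp
    calc ∑ j, c j * g j 0 = ∑ j, c j * ⟪u j, f 0⟫ :=
          Finset.sum_congr rfl fun j _ => by rw [this j]
      _ = 0 := hcinner (f 0)
  set G : Fin (n+1) → ℝ → ℝ := fun j t => g j t - g j 0 with hGdef
  -- Step 8: the coarse functional equation
  have hGrel : ∀ t : Fin (n+1) → ℝ, ∑ j, c j * t j = 0 → |∑ j, c j * G j (t j)| ≤ M := by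
    intro t ht
    obtain ⟨x, hx⟩ := hTsurj 0 (fun i => t i.1)
    have hxne : ∀ (i : Fin (n+1)) (hi : i ≠ 0), ⟪u i, x⟫ = t i := by
      intro i hi
      have := congrFun hx ⟨i, hi⟩
      rw [hTapp] at this
      exact this
    have hxall : ∀ i : Fin (n+1), ⟪u i, x⟫ = t i := by
      intro i
      by_cases hi : i = 0
      · subst hi
        have hdiff : ∑ j, (c j * ⟪u j, x⟫ - c j * t j) = c 0 * ⟪u 0, x⟫ - c 0 * t 0 := by
          apply Finset.sum_eq_single_of_mem 0 (Finset.mem_univ 0)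
          intro i _ hi0
          rw [hxne i hi0]
          ring
        rw [Finset.sum_sub_distrib, hcinner x, ht, sub_zero] at hdiff
        have : c 0 * (⟪u 0, x⟫ - t 0) = 0 := by linarith [hdiff]
        rcases mul_eq_zero.mp this with h | h
        · exact absurd h (hcne 0)
        · linarith [h]
      · exact hxne i hi
    have hterm : ∀ j : Fin (n+1), |g j (t j) - ⟪u j, f x⟫| ≤ 2 * R := by
      intro j
      exact key j x ((t j) • u j) x (by rw [hinner_smul]; exact (hxall j).symm) rfl
    have hsplit : ∑ j, c j * G j (t j) = ∑ j, c j * (g j (t j) - ⟪u j, f x⟫) := by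
      have expand : ∀ j : Fin (n+1), c j * G j (t j) =
          (c j * (g j (t j) - ⟪u j, f x⟫) + c j * ⟪u j, f x⟫) - c j * g j 0 := by
        intro j
        rw [hGdef]
        ring
      calc ∑ j, c j * G j (t j)
          = ∑ j, ((c j * (g j (t j) - ⟪u j, f x⟫) + c j * ⟪u j, f x⟫) - c j * g j 0) :=
            Finset.sum_congr rfl fun j _ => expand j
        _ = (∑ j, c j * (g j (t j) - ⟪u j, f x⟫) + ∑ j, c j * ⟪u j, f x⟫)
              - ∑ j, c j * g j 0 := by
            rw [Finset.sum_sub_distrib, Finset.sum_add_distrib]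
        _ = ∑ j, c j * (g j (t j) - ⟪u j, f x⟫) := by
            rw [hcinner (f x), hg0sum]
            ring
    rw [hsplit]
    calc |∑ j, c j * (g j (t j) - ⟪u j, f x⟫)|
        ≤ ∑ j, |c j * (g j (t j) - ⟪u j, f x⟫)| := Finset.abs_sum_le_sum_abs _ _
      _ ≤ ∑ j, |c j| * (2 * R) := by
          apply Finset.sum_le_sum
          intro j _
          rw [abs_mul]
          exact mul_le_mul_of_nonneg_left (hterm j) (abs_nonneg _)
      _ = M := by rw [← Finset.sum_mul, ← hSdef, hMdef]; ring
  -- growth of G 0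
  have hGgrow : ∀ t, |G 0 t| ≤ K * |t| + C := by
    intro t
    have h1 : G 0 t = ⟪u 0, f (t • u 0) - f 0⟫ := by
      rw [hGdef, hgdef]
      simp [inner_sub_right]
    rw [h1]
    calc |⟪u 0, f (t • u 0) - f 0⟫| ≤ ‖u 0‖ * ‖f (t • u 0) - f 0‖ :=
          abs_real_inner_le_norm _ _
      _ = dist (f (t • u 0)) (f 0) := by rw [hu1 0, one_mul, dist_eq_norm]
      _ ≤ K * dist (t • u 0) 0 + C := (hQI.1 (t • u 0) 0).2
      _ = K * |t| + C := by
          rw [dist_zero_right, norm_smul, hu1 0, mul_one, Real.norm_eq_abs]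
  -- Step 9: apply the functional equation lemma
  have hd01 : (0 : Fin (n+1)) ≠ ⟨1, by omega⟩ := by simp [Fin.ext_iff]
  have hd02 : (0 : Fin (n+1)) ≠ ⟨2, by omega⟩ := by simp [Fin.ext_iff]
  have hd12 : (⟨1, by omega⟩ : Fin (n+1)) ≠ ⟨2, by omega⟩ := by simp [Fin.ext_iff]
  obtain ⟨lam, hlam⟩ := funceq_to_affine c G 0 ⟨1, by omega⟩ ⟨2, by omega⟩ hd01 hd02 hd12
    hcne M K C hMnn (le_trans zero_le_one hK)
    (fun j => by rw [hGdef]; ring) hGgrow hGrel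
  -- pointwise estimate for each functional
  have hpoint : ∀ (j : Fin (n+1)) (x : E),
      |⟪u j, f x⟫ - (lam * ⟪u j, x⟫ + g j 0)| ≤ ε := by
    intro j x
    have h1 := gcomp j x
    have h2 := hlam j ⟪u j, x⟫
    rw [hGdef] at h2
    have h3 : 4 * M / |c j| ≤ 4 * M / cmin :=
      div_le_div_of_nonneg_left (by positivity) hcminpos (hcminle j)
    calc |⟪u j, f x⟫ - (lam * ⟪u j, x⟫ + g j 0)|
        = |(⟪u j, f x⟫ - g j ⟪u j, x⟫) + ((g j ⟪u j, x⟫ - g j 0) - lam * ⟪u j, x⟫)| := by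
          ring_nf
      _ ≤ |⟪u j, f x⟫ - g j ⟪u j, x⟫| + |(g j ⟪u j, x⟫ - g j 0) - lam * ⟪u j, x⟫| :=
          abs_add_le _ _
      _ ≤ 2 * R + 4 * M / cmin := by
          apply add_le_add h1 (le_trans h2 h3)
      _ = ε := by rw [hεdef]
  -- Step 10: the affine comparison map
  set b : E := Teq.symm (fun i => g i.1 0) with hbdef
  have hTb : ∀ i : {i : Fin (n+1) // i ≠ 0}, ⟪u i.1, b⟫ = g i.1 0 := by
    intro i
    have h1 : T 0 b = fun i : {i : Fin (n+1) // i ≠ 0} => g i.1 0 := by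
      have := Teq.apply_symm_apply (fun i : {i : Fin (n+1) // i ≠ 0} => g i.1 0)
      rw [hTeqdef] at this
      exact this
    have := congrFun h1 i
    rw [hTapp] at this
    exact this
  have hbound : ∀ x : E, dist (f x) (lam • x + b) ≤ R' := by
    intro x
    rw [dist_eq_norm]
    set y : E := f x - (lam • x + b) with hydef
    have hTy : ∀ i : {i : Fin (n+1) // i ≠ 0}, |⟪u i.1, y⟫| ≤ ε := by
      intro i
      have h1 : ⟪u i.1, y⟫ = ⟪u i.1, f x⟫ - (lam * ⟪u i.1, x⟫ + g i.1 0) := by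
        rw [hydef, inner_sub_right, inner_add_right, real_inner_smul_right, hTb i]
      rw [h1]
      exact hpoint i.1 x
    have hnormTy : ‖T 0 y‖ ≤ ε := by
      rw [pi_norm_le_iff_of_nonneg hεnn]
      intro i
      rw [hTapp, Real.norm_eq_abs]
      exact hTy i
    have hy : y = Sc (T 0 y) := by
      rw [hScdef, LinearMap.coe_toContinuousLinearMap']
      have : T 0 y = Teq y := by rw [hTeqdef]; rfl
      rw [this, LinearEquiv.coe_coe, Teq.symm_apply_apply]
    calc ‖y‖ = ‖Sc (T 0 y)‖ := by rw [← hy]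
      _ ≤ ‖Sc‖ * ‖T 0 y‖ := Sc.le_opNorm _
      _ ≤ ‖Sc‖ * ε := mul_le_mul_of_nonneg_left hnormTy (norm_nonneg _)
      _ = R' := by rw [hR'def]
  -- Step 11: lam is nonzero
  have hlam0 : lam ≠ 0 := by
    intro h0
    have hb1 : ∀ x : E, dist (f x) b ≤ R' := by
      intro x
      have := hbound x
      rw [h0, zero_smul, zero_add] at this
      exact this
    set D : ℝ := K * (C + 2 * R' + 1) with hDdef
    have hKpos : (0:ℝ) < K := lt_of_lt_of_le zero_lt_one hK
    have hDnn : 0 ≤ D := by positivity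
    set x₂ : E := D • u 0 with hx₂def
    have hdist : dist (0 : E) x₂ = D := by
      rw [dist_zero_left, hx₂def, norm_smul, hu1 0, mul_one, Real.norm_eq_abs,
        abs_of_nonneg hDnn]
    have hlow := (hQI.1 0 x₂).1
    rw [hdist] at hlow
    have h1 : (1/K) * D - C = 2 * R' + 1 := by
      rw [hDdef]
      field_simp
      ring
    have h2 : dist (f 0) (f x₂) ≤ 2 * R' := by
      calc dist (f 0) (f x₂) ≤ dist (f 0) b + dist b (f x₂) := dist_triangle _ _ _
        _ = dist (f 0) b + dist (f x₂) b := by rw [dist_comm b]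
        _ ≤ R' + R' := add_le_add (hb1 0) (hb1 x₂)
        _ = 2 * R' := by ring
    linarith
  exact ⟨lam, b, hlam0, hbound⟩
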